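/- Let c > 2 and consider positive reals Δ₁, …, Δ_{M−1} with Δ_i = α_{i+1} − α₁ where α₁ ≥ 1/(c−1) and α_{i+1} ≥ c·α_i for all i. Then for every i ∈ {1, …, M−1}: (c²·Σ_{j=1}^{i} Δ_j² + 2)/(c²·Σ_{j=1}^{i−1} Δ_j² + 2) ≥ c²/4, so that (1/2)·log(2·(c²Σ_{j≤i}Δ_j² + 2)/(c²Σ_{j≤i−1}Δ_j² + 2)) ≥ (1/2)·log(c²/2). -/

import Mathlib

open Real

theorem stmt_15 (c : ℝ) (hc : 2 < c) (M : ℕ) (hM : 2 ≤ M) (α : ℕ → ℝ)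
    (hpos : 0 < α 1) (h1 : 1 / (c - 1) ≤ α 1)
    (hgrow : ∀ i, 1 ≤ i → i ≤ M - 1 → c * α i ≤ α (i+1)) :
    ∀ i, 1 ≤ i → i ≤ M - 1 →
      c^2 / 4 ≤ (c^2 * (∑ j ∈ Finset.Icc 1 i, (α (j+1) - α 1)^2) + 2) /
                (c^2 * (∑ j ∈ Finset.Icc 1 (i-1), (α (j+1) - α 1)^2) + 2) ∧
      (1/2) * Real.log (c^2 / 2)
        ≤ (1/2) * Real.log (2 * ((c^2 * (∑ j ∈ Finset.Icc 1 i, (α (j+1) - α 1)^2) + 2) /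
                (c^2 * (∑ j ∈ Finset.Icc 1 (i-1), (α (j+1) - α 1)^2) + 2))) := by
  have hc1 : (0:ℝ) < c - 1 := by linarith
  have hα1 : 1 ≤ (c - 1) * α 1 := by
    have := (div_le_iff₀ hc1).mp h1
    linarith
  have key : ∀ k, 1 ≤ k → k ≤ M - 1 →
      1 ≤ α (k+1) - α 1 ∧
      (c^2 - 1) * (∑ j ∈ Finset.Icc 1 (k-1), (α (j+1) - α 1)^2) + 1
        ≤ (α (k+1) - α 1)^2 := by
    intro k
    induction k with
    | zero => omega
    | succ n ih =>
      intro _ hle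
      by_cases hn : n = 0
      · subst hn
        have hg := hgrow 1 le_rfl (by omega)
        have hΔ1 : 1 ≤ α 2 - α 1 := by nlinarith
        constructor
        · exact hΔ1
        · simp only [Nat.add_sub_cancel]
          rw [show Finset.Icc 1 0 = ∅ from rfl, Finset.sum_empty, mul_zero,
            zero_add]
          nlinarith
      · have hn1 : 1 ≤ n := by omega
        obtain ⟨ihΔ, ihS⟩ := ih hn1 (by omega)
        have hg := hgrow (n+1) (by omega) hle
        -- Δ_{n+1} ≥ c * Δ_n + (c-1) α 1 ≥ c Δ_n + 1
        have hstep : c * (α (n+1) - α 1) + 1 ≤ α (n+2) - α 1 := by nlinarith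
        have hΔpos : (0:ℝ) < α (n+1) - α 1 := by linarith
        have hΔnew : 1 ≤ α (n+1+1) - α 1 := by nlinarith
        refine ⟨hΔnew, ?_⟩
        have hsum : (∑ j ∈ Finset.Icc 1 (n+1-1), (α (j+1) - α 1)^2)
            = (∑ j ∈ Finset.Icc 1 (n-1), (α (j+1) - α 1)^2) + (α (n+1) - α 1)^2 := by
          rw [Nat.add_sub_cancel, show n = (n-1) + 1 by omega,
            Finset.sum_Icc_succ_top (by omega)]
          rw [show n - 1 + 1 = n by omega]
        rw [hsum]
        have hsq : (c * (α (n+1) - α 1) + 1)^2 ≤ (α (n+2) - α 1)^2 := by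
          have h0 : (0:ℝ) ≤ c * (α (n+1) - α 1) + 1 := by nlinarith
          exact pow_le_pow_left₀ h0 hstep 2
        nlinarith [sq_nonneg (α (n+1) - α 1), hΔpos]
  intro i hi1 hiM
  obtain ⟨hΔ1, hkey⟩ := key i hi1 hiM
  set S0 : ℝ := ∑ j ∈ Finset.Icc 1 (i-1), (α (j+1) - α 1)^2 with hS0
  set S1 : ℝ := ∑ j ∈ Finset.Icc 1 i, (α (j+1) - α 1)^2 with hS1
  have hS0nn : 0 ≤ S0 := Finset.sum_nonneg fun j _ => sq_nonneg _
  have hsum : S1 = S0 + (α (i+1) - α 1)^2 := by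
    rw [hS1, hS0, show i = (i-1) + 1 by omega,
      Finset.sum_Icc_succ_top (by omega)]
    rw [show i - 1 + 1 = i by omega]
  have hden : (0:ℝ) < c^2 * S0 + 2 := by nlinarith
  have hratio : c^2 / 4 ≤ (c^2 * S1 + 2) / (c^2 * S0 + 2) := by
    rw [le_div_iff₀ hden]
    rw [hsum]
    have h2 : c^2 * ((c^2 - 1) * S0 + 1) ≤ c^2 * (α (i+1) - α 1)^2 :=
      mul_le_mul_of_nonneg_left hkey (sq_nonneg c)
    nlinarith [mul_nonneg (mul_nonneg (sq_nonneg c) (sq_nonneg c)) hS0nn,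
      sq_nonneg c]
  refine ⟨hratio, ?_⟩
  have hc2 : (0:ℝ) < c^2 / 2 := by nlinarith
  have hlog : Real.log (c^2 / 2) ≤
      Real.log (2 * ((c^2 * S1 + 2) / (c^2 * S0 + 2))) := by
    apply Real.log_le_log hc2
    linarith
  linarith
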